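/- Let G be a topological group with identity 0 such that G^ω is countably compact, and let κ be an infinite cardinal. Then the Σ-product Σ = {g ∈ G^κ : the set of coordinates α with g(α) ≠ 0 is countable} is a dense subset of G^κ such that every infinite subset of Σ has an accumulation point in G^κ; in particular, G^κ is countably pracompact. -/

import Mathlib

open Filter Topology

/-- A free (nonprincipal) ultrafilter on ℕ. -/
def FreeUltrafilter (p : Ultrafilter ℕ) : Prop := ∀ n : ℕ, p ≠ pure n

/-- `l` is the `p`-limit of the sequence `x`. -/
def IsPLimit {X : Type*} [TopologicalSpace X] (p : Ultrafilter ℕ) (x : ℕ → X) (l : X) : Prop :=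
  ∀ U ∈ nhds l, {n : ℕ | x n ∈ U} ∈ p

/-- A topological space is selectively pseudocompact. -/
def SelectivelyPseudocompact (X : Type*) [TopologicalSpace X] : Prop :=
  ∀ U : ℕ → Set X, (∀ n, IsOpen (U n)) → (∀ n, (U n).Nonempty) →
    ∃ (x : ℕ → X) (l : X) (p : Ultrafilter ℕ),
      FreeUltrafilter p ∧ (∀ n, x n ∈ U n) ∧ IsPLimit p x l

/-- A topological space is countably compact: every infinite subset has an accumulation point. -/
def CountablyCompact (X : Type*) [TopologicalSpace X] : Prop :=
  ∀ S : Set X, S.Infinite → ∃ x : X, AccPt x (Filter.principal S)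

/-- A topological space is countably pracompact. -/
def CountablyPracompact (X : Type*) [TopologicalSpace X] : Prop :=
  ∃ D : Set X, Dense D ∧
    ∀ S : Set X, S ⊆ D → S.Infinite → ∃ x : X, AccPt x (Filter.principal S)

/-- A selective ultrafilter on ℕ. -/
def SelectiveUltrafilter (p : Ultrafilter ℕ) : Prop :=
  FreeUltrafilter p ∧
    ∀ A : ℕ → Set ℕ, Pairwise (Function.onFun Disjoint A) → (⋃ n, A n) = Set.univ →
      (∃ n, A n ∈ p) ∨ ∃ B ∈ p, ∀ n, (B ∩ A n).ncard = 1

/-- Rudin–Keisler order on ultrafilters on ℕ. -/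
def RKle (p q : Ultrafilter ℕ) : Prop := ∃ f : ℕ → ℕ, Ultrafilter.map f q = p

/-- RK-incomparability. -/
def RKIncomparable (p q : Ultrafilter ℕ) : Prop := ¬ RKle p q ∧ ¬ RKle q p

/-- The restriction of a finitely supported `ZMod 2`-valued function (a finite subset of `X`)
to a set `S` (the intersection with `S`). -/
noncomputable def restrictSet {X : Type*} (S : Set X) (f : X →₀ ZMod 2) : X →₀ ZMod 2 :=
  letI := Classical.decPred (· ∈ S)
  Finsupp.filter (· ∈ S) f

/-- A topological space is pseudocompact: every continuous real-valued function is bounded. -/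
def Pseudocompact (X : Type*) [TopologicalSpace X] : Prop :=
  ∀ f : X → ℝ, Continuous f → ∃ M : ℝ, ∀ x : X, |f x| ≤ M

/-- Accumulation points are preserved by continuous injective maps. -/
lemma accPt_image_of_continuous_injective {X Y : Type*} [TopologicalSpace X] [TopologicalSpace Y]
    {g : X → Y} (hg : Continuous g) (hinj : Function.Injective g)
    {x : X} {T : Set X} (h : AccPt x (Filter.principal T)) :
    AccPt (g x) (Filter.principal (g '' T)) := by
  rw [accPt_iff_nhds] at h ⊢
  intro U hU
  obtain ⟨y, ⟨hyU, hyT⟩, hyx⟩ := h (g ⁻¹' U) (hg.continuousAt.preimage_mem_nhds hU)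
  exact ⟨g y, ⟨hyU, ⟨y, hyT, rfl⟩⟩, fun e => hyx (hinj e)⟩

/-- If `G^ω` is countably compact, the Σ-product is a dense subset of `G^κ`
every infinite subset of which has an accumulation point; in particular `G^κ` is
countably pracompact. -/
theorem stmt1 {G : Type*} [AddGroup G] [TopologicalSpace G] [IsTopologicalAddGroup G]
    (h : CountablyCompact (ℕ → G)) (κ : Cardinal.{0}) (hκ : Cardinal.aleph0 ≤ κ) :
    (Dense {g : κ.out → G | {α : κ.out | g α ≠ 0}.Countable} ∧
      ∀ S : Set (κ.out → G), S ⊆ {g : κ.out → G | {α : κ.out | g α ≠ 0}.Countable} →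
        S.Infinite → ∃ x : κ.out → G, AccPt x (Filter.principal S)) ∧
    CountablyPracompact (κ.out → G) := by
  classical
  haveI : Infinite κ.out := Cardinal.infinite_iff.2 (by rw [Cardinal.mk_out]; exact hκ)
  -- Density of the Σ-product
  have hdense : Dense {g : κ.out → G | {α : κ.out | g α ≠ 0}.Countable} := by
    rw [dense_iff_inter_open]
    rintro U hU ⟨x, hx⟩
    obtain ⟨I, u, hu, hsub⟩ := isOpen_pi_iff.1 hU x hx
    refine ⟨fun α => if α ∈ I then x α else 0, hsub ?_, ?_⟩
    · intro α hα
      simp only [Set.mem_setOf_eq] at hα ⊢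
      rw [if_pos (by exact_mod_cast hα)]
      exact (hu α (by exact_mod_cast hα)).2
    · refine (I.finite_toSet.countable).mono ?_
      intro α hα
      simp only [Set.mem_setOf_eq] at hα
      by_contra hαI
      exact hα (if_neg hαI)
  have hmain : ∀ S : Set (κ.out → G),
      S ⊆ {g : κ.out → G | {α : κ.out | g α ≠ 0}.Countable} →
      S.Infinite → ∃ x : κ.out → G, AccPt x (Filter.principal S) := by
    intro S hSsig hSinf
    -- extract a countable infinite subset T of S
    let f : ℕ ↪ S := hSinf.natEmbedding
    let T : Set (κ.out → G) := Set.range fun n => (f n : κ.out → G)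
    have hTS : T ⊆ S := by rintro t ⟨n, rfl⟩; exact (f n).2
    have hTinf : T.Infinite :=
      Set.infinite_range_of_injective (fun a b hab => by
        simpa [f.injective.eq_iff] using Subtype.coe_injective hab)
    -- countable infinite superset C' of all supports
    let C : Set κ.out := ⋃ n, {α : κ.out | (f n : κ.out → G) α ≠ 0}
    let C' : Set κ.out := C ∪ Set.range (Infinite.natEmbedding κ.out)
    have hC'count : C'.Countable :=
      (Set.countable_iUnion fun n => hSsig (f n).2).union
        (Set.countable_range _)
    have hC'inf : C'.Infinite :=
      Set.Infinite.mono Set.subset_union_right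
        (Set.infinite_range_of_injective (Infinite.natEmbedding κ.out).injective)
    haveI := hC'count.to_subtype
    haveI := hC'inf.to_subtype
    -- identify C' with ℕ
    obtain ⟨e⟩ : Nonempty (↥C' ≃ ℕ) := nonempty_equiv_of_countable
    -- maps back and forth
    let Φ : (κ.out → G) → (ℕ → G) := fun g n => g (e.symm n : ↥C')
    let Ψ : (ℕ → G) → (κ.out → G) :=
      fun g α => if hα : α ∈ C' then g (e ⟨α, hα⟩) else 0
    have hΦΨ : ∀ g, Φ (Ψ g) = g := by
      intro g; funext n
      simp only [Φ, Ψ, dif_pos (e.symm n).2]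
      congr 1
      rw [show (⟨(e.symm n : ↥C'), (e.symm n).2⟩ : ↥C') = e.symm n from rfl,
        Equiv.apply_symm_apply]
    have hΨinj : Function.Injective Ψ := Function.LeftInverse.injective hΦΨ
    have hΨcont : Continuous Ψ := by
      refine continuous_pi fun α => ?_
      by_cases hα : α ∈ C'
      · simp only [Ψ, dif_pos hα]
        exact continuous_apply (e ⟨α, hα⟩)
      · simp only [Ψ, dif_neg hα]
        exact continuous_const
    -- elements of T are supported on C'
    have hsupp : ∀ t ∈ T, Ψ (Φ t) = t := by
      rintro t ⟨n, rfl⟩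
      funext α
      by_cases hα : α ∈ C'
      · simp only [Ψ, Φ, dif_pos hα, Equiv.symm_apply_apply]
      · simp only [Ψ, dif_neg hα]
        by_contra hne
        exact hα (Or.inl (Set.mem_iUnion.2 ⟨n, fun hz => hne hz.symm⟩))
    have hΦTinf : (Φ '' T).Infinite := by
      apply Set.Infinite.image ?_ hTinf
      intro a ha b hb hab
      rw [← hsupp a ha, ← hsupp b hb, hab]
    obtain ⟨y, hy⟩ := h (Φ '' T) hΦTinf
    have himg : Ψ '' (Φ '' T) = T := by
      apply Set.Subset.antisymm
      · rintro _ ⟨_, ⟨t, ht, rfl⟩, rfl⟩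
        rw [hsupp t ht]; exact ht
      · intro t ht
        exact ⟨Φ t, ⟨t, ht, rfl⟩, hsupp t ht⟩
    have hacc := accPt_image_of_continuous_injective hΨcont hΨinj hy
    rw [himg] at hacc
    exact ⟨Ψ y, hacc.mono (Filter.principal_mono.2 hTS)⟩
  exact ⟨⟨hdense, hmain⟩, ⟨_, hdense, hmain⟩⟩
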